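/- Quantitative core of Theorem 2 (double exponential bound): Let 0 ≤ T₀ < T⋆ ≤ ∞ and let Ω : [T₀, T⋆) → ℝ be continuous and nondecreasing with Ω(T₀) ≥ e^{e}. Suppose there exist constants R > 1, K > 0 and c_L > 0 such that for all T₀ ≤ t₀ < t₁ < T⋆ there exists λ₀ > 0 satisfying (i) λ₀ ≥ c_L · Ω(t₀) / (R · Ω(t₁)), and (ii) Ω(t) ≤ R · Ω(t₀) · ( 1 + (K/λ₀) · ∫_{t₀}^{t} (log Ω(τ) + 1) dτ ) for every t ∈ [t₀, t₁]. Then there exist constants C₁′, C₂′ > 0, depending only on R, K, c_L, T₀ and Ω(T₀), such that log log Ω(t) ≤ C₁′ t + C₂′ for all t ∈ [T₀, T⋆). In particular, if T⋆ < ∞ then Ω is bounded on [T₀, T⋆). -/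

import Mathlib

open Real MeasureTheory

set_option maxHeartbeats 1000000 in
/-- Quantitative core of Theorem 2 (double exponential bound). -/
theorem qg_double_exponential_bound
    (T₀ : ℝ) (Tstar : EReal) (hT₀ : 0 ≤ T₀) (hTT : (T₀ : EReal) < Tstar)
    (Ω : ℝ → ℝ)
    (hcont : ContinuousOn Ω {t : ℝ | T₀ ≤ t ∧ (t : EReal) < Tstar})
    (hmono : ∀ s t : ℝ, T₀ ≤ s → s ≤ t → (t : EReal) < Tstar → Ω s ≤ Ω t)
    (hbig : Real.exp (Real.exp 1) ≤ Ω T₀)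
    (R K cL : ℝ) (hR : 1 < R) (hK : 0 < K) (hcL : 0 < cL)
    (hyp : ∀ t₀ t₁ : ℝ, T₀ ≤ t₀ → t₀ < t₁ → (t₁ : EReal) < Tstar →
      ∃ lam₀ > 0,
        cL * Ω t₀ / (R * Ω t₁) ≤ lam₀ ∧
        ∀ t ∈ Set.Icc t₀ t₁,
          Ω t ≤ R * Ω t₀ *
            (1 + (K / lam₀) * ∫ τ in t₀..t, (Real.log (Ω τ) + 1))) :
    (∃ C₁ > 0, ∃ C₂ > 0, ∀ t : ℝ, T₀ ≤ t → (t : EReal) < Tstar →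
        Real.log (Real.log (Ω t)) ≤ C₁ * t + C₂) ∧
    (Tstar < ⊤ → ∃ M : ℝ, ∀ t : ℝ, T₀ ≤ t → (t : EReal) < Tstar → Ω t ≤ M) := by
  classical
  have hEe : (0:ℝ) < Real.exp (Real.exp 1) := Real.exp_pos _
  have hdom : ∀ t, T₀ ≤ t → (t:EReal) < Tstar → Real.exp (Real.exp 1) ≤ Ω t :=
    fun t ht htT => hbig.trans (hmono T₀ t le_rfl ht htT)
  have hΩpos : ∀ t, T₀ ≤ t → (t:EReal) < Tstar → 0 < Ω t :=
    fun t ht htT => lt_of_lt_of_le hEe (hdom t ht htT)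
  have hlogΩ : ∀ t, T₀ ≤ t → (t:EReal) < Tstar → Real.exp 1 ≤ Real.log (Ω t) := by
    intro t ht htT
    have h := hdom t ht htT
    calc Real.exp 1 = Real.log (Real.exp (Real.exp 1)) := (Real.log_exp _).symm
      _ ≤ Real.log (Ω t) := Real.log_le_log hEe h
  -- constants
  set B : ℝ := Real.log (Ω T₀) + 1 with hBdef
  have hBge : Real.exp 1 + 1 ≤ B := by
    have := hlogΩ T₀ le_rfl hTT
    simp only [hBdef]; linarith
  have hBpos : (1:ℝ) < B := by
    have := Real.add_one_le_exp (1:ℝ)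
    linarith
  set c : ℝ := Real.log (2*R) + 1 with hcdef
  have hcgt : (1:ℝ) < c := by
    have h2R : (1:ℝ) < 2*R := by linarith
    have := Real.log_pos h2R
    simp only [hcdef]; linarith
  have hcpos : (0:ℝ) < c := by linarith
  set A : ℝ := R^2 * K / cL with hAdef
  have hApos : 0 < A := by
    have hR0 : (0:ℝ) < R := by linarith
    positivity
  -- step width and cumulative sums
  set h : ℕ → ℝ := fun n => 1/(2*A*(B+(n+1)*c)) with hhdef
  have hBnc_pos : ∀ n : ℕ, (0:ℝ) < B + (n+1)*c := by
    intro n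
    have : (0:ℝ) ≤ (n:ℝ) := Nat.cast_nonneg n
    nlinarith
  have hhpos : ∀ n, 0 < h n := by
    intro n
    have := hBnc_pos n
    simp only [hhdef]
    positivity
  set S : ℕ → ℝ := fun n => ∑ k ∈ Finset.range n, h k with hSdef
  have hS0 : S 0 = 0 := by simp [hSdef]
  have hSsucc : ∀ n, S (n+1) = S n + h n := by
    intro n; simp [hSdef, Finset.sum_range_succ]
  have hSnonneg : ∀ n, 0 ≤ S n := by
    intro n
    apply Finset.sum_nonneg
    intro k _
    exact (hhpos k).le
  -- continuity of τ ↦ log (Ω τ) + 1 on subintervals of the domain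
  have hGcont : ∀ a b : ℝ, T₀ ≤ a → (b:EReal) < Tstar →
      ContinuousOn (fun τ => Real.log (Ω τ) + 1) (Set.Icc a b) := by
    intro a b ha hb
    have hsub : Set.Icc a b ⊆ {t : ℝ | T₀ ≤ t ∧ (t : EReal) < Tstar} := by
      intro x hx
      refine ⟨ha.trans hx.1, ?_⟩
      exact lt_of_le_of_lt (by exact_mod_cast hx.2) hb
    have h1 : ContinuousOn Ω (Set.Icc a b) := hcont.mono hsub
    have h2 : ContinuousOn (fun τ => Real.log (Ω τ)) (Set.Icc a b) := by
      apply h1.log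
      intro x hx
      exact (hΩpos x ((hsub hx).1) ((hsub hx).2)).ne'
    exact h2.add continuousOn_const
  -- the key step lemma
  have step : ∀ t₀' t₁' bnd : ℝ, T₀ ≤ t₀' → t₀' < t₁' → (t₁' : EReal) < Tstar →
      (∀ τ ∈ Set.Icc t₀' t₁', Real.log (Ω τ) + 1 ≤ bnd) →
      (t₁' - t₀') * bnd ≤ 1/(2*A) →
      Ω t₁' ≤ 2*R*Ω t₀' := by
    intro t₀' t₁' bnd ht₀ hlt htT hbnd hwidth
    obtain ⟨lam₀, hlam₀pos, hlam, hineq⟩ := hyp t₀' t₁' ht₀ hlt htT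
    have ht₀T : (t₀' : EReal) < Tstar :=
      lt_trans (by exact_mod_cast hlt) htT
    have hP0 : 0 < Ω t₀' := hΩpos t₀' ht₀ ht₀T
    have hP1 : 0 < Ω t₁' := hΩpos t₁' (ht₀.trans hlt.le) htT
    have hR0 : (0:ℝ) < R := by linarith
    set I : ℝ := ∫ τ in t₀'..t₁', (Real.log (Ω τ) + 1) with hIdef
    have hinteg : IntervalIntegrable (fun τ => Real.log (Ω τ) + 1) volume t₀' t₁' := by
      apply ContinuousOn.intervalIntegrable
      rw [Set.uIcc_of_le hlt.le]
      exact hGcont t₀' t₁' ht₀ htT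
    have hInonneg : 0 ≤ I := by
      apply intervalIntegral.integral_nonneg hlt.le
      intro u hu
      have huT : (u : EReal) < Tstar := lt_of_le_of_lt (by exact_mod_cast hu.2) htT
      have := hlogΩ u (ht₀.trans hu.1) huT
      have he : (0:ℝ) < Real.exp 1 := Real.exp_pos 1
      linarith
    have hIle : I ≤ 1/(2*A) := by
      have h1 : I ≤ ∫ _ in t₀'..t₁', bnd := by
        apply intervalIntegral.integral_mono_on hlt.le hinteg intervalIntegrable_const hbnd
      have h2 : (∫ _ in t₀'..t₁', bnd) = (t₁' - t₀') * bnd := by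
        simp [smul_eq_mul]
      linarith
    have hmain : Ω t₁' ≤ R * Ω t₀' * (1 + (K / lam₀) * I) :=
      hineq t₁' ⟨hlt.le, le_rfl⟩
    -- bound K/lam₀
    have h1 : K / lam₀ ≤ K * (R * Ω t₁') / (cL * Ω t₀') := by
      rw [div_le_div_iff₀ hlam₀pos (by positivity)]
      have : cL * Ω t₀' ≤ lam₀ * (R * Ω t₁') := by
        have := (div_le_iff₀ (by positivity)).mp hlam
        linarith
      nlinarith
    have h2 : (K / lam₀) * I ≤ (K * (R * Ω t₁') / (cL * Ω t₀')) * I :=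
      mul_le_mul_of_nonneg_right h1 hInonneg
    have e2 : R * Ω t₀' * (K * (R * Ω t₁') / (cL * Ω t₀')) = A * Ω t₁' := by
      rw [hAdef]
      field_simp
    have h3 : Ω t₁' ≤ R * Ω t₀' + A * Ω t₁' * I := by
      have h4 : R * Ω t₀' * (1 + (K / lam₀) * I)
          ≤ R * Ω t₀' * (1 + (K * (R * Ω t₁') / (cL * Ω t₀')) * I) := by
        apply mul_le_mul_of_nonneg_left _ (by positivity)
        linarith
      have h5 : R * Ω t₀' * (1 + (K * (R * Ω t₁') / (cL * Ω t₀')) * I)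
          = R * Ω t₀' + A * Ω t₁' * I := by
        calc R * Ω t₀' * (1 + (K * (R * Ω t₁') / (cL * Ω t₀')) * I)
            = R * Ω t₀' + (R * Ω t₀' * (K * (R * Ω t₁') / (cL * Ω t₀'))) * I := by ring
          _ = R * Ω t₀' + A * Ω t₁' * I := by rw [e2]
      linarith
    have h6 : A * Ω t₁' * I ≤ Ω t₁' / 2 := by
      have h7 : A * Ω t₁' * I ≤ A * Ω t₁' * (1/(2*A)) := by
        apply mul_le_mul_of_nonneg_left hIle (by positivity)
      have h8 : A * Ω t₁' * (1/(2*A)) = Ω t₁' / 2 := by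
        field_simp
      linarith
    linarith
  -- key induction
  have key : ∀ n : ℕ, ∀ t : ℝ, T₀ ≤ t → (t:EReal) < Tstar → t ≤ T₀ + S n →
      Real.log (Ω t) + 1 ≤ B + n * c := by
    intro n
    induction n with
    | zero =>
      intro t ht htT hle
      have : t = T₀ := le_antisymm (by rw [hS0] at hle; linarith) ht
      subst this
      simp [hBdef]
    | succ n ih =>
      intro t ht htT hle
      have hmono_cast : (n:ℝ) * c ≤ ((n:ℕ)+1 : ℕ) * c := by
        push_cast
        nlinarith [Nat.cast_nonneg (α := ℝ) n]
      by_cases hcase : t ≤ T₀ + S n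
      · have := ih t ht htT hcase
        push_cast
        push_cast at this
        nlinarith
      · push_neg at hcase
        set t₀' : ℝ := T₀ + S n with ht₀'def
        have ht₀T₀ : T₀ ≤ t₀' := by
          have := hSnonneg n; simp only [ht₀'def]; linarith
        have hlt : t₀' < t := hcase
        have ht₀T : (t₀' : EReal) < Tstar := lt_trans (by exact_mod_cast hlt) htT
        have hGt₀ : Real.log (Ω t₀') + 1 ≤ B + n * c := ih t₀' ht₀T₀ ht₀T le_rfl
        by_contra hbad
        push_neg at hbad
        push_cast at hbad
        -- IVT to find t* with log Ω t* + 1 = B+(n+1)c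
        have hbad' : B + ((n:ℝ)+1) * c < Real.log (Ω t) + 1 := by linarith
        have hGt₀' : Real.log (Ω t₀') + 1 < B + ((n:ℝ)+1) * c := by nlinarith
        have hIVT := intermediate_value_Icc hlt.le (hGcont t₀' t ht₀T₀ htT)
        have hmem : B + ((n:ℝ)+1) * c ∈ Set.Icc (Real.log (Ω t₀') + 1) (Real.log (Ω t) + 1) :=
          ⟨hGt₀'.le, hbad'.le⟩
        obtain ⟨ts, htsmem, htseq⟩ := hIVT hmem
        have hts0 : t₀' ≤ ts := htsmem.1
        have hts1 : ts ≤ t := htsmem.2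
        have htsT : (ts : EReal) < Tstar := lt_of_le_of_lt (by exact_mod_cast hts1) htT
        have htseq' : Real.log (Ω ts) + 1 = B + ((n:ℝ)+1) * c := htseq
        have htslt : t₀' < ts := by
          rcases lt_or_eq_of_le hts0 with h' | h'
          · exact h'
          · exfalso
            rw [← h'] at htseq'
            linarith
        -- bound on the interval via monotonicity
        have hbndIcc : ∀ τ ∈ Set.Icc t₀' ts, Real.log (Ω τ) + 1 ≤ B + ((n:ℝ)+1) * c := by
          intro τ hτ
          have hτT₀ : T₀ ≤ τ := ht₀T₀.trans hτ.1
          have hΩτ : Ω τ ≤ Ω ts := hmono τ ts hτT₀ hτ.2 htsT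
          have hτpos : 0 < Ω τ := hΩpos τ hτT₀
            (lt_of_le_of_lt (by exact_mod_cast hτ.2) htsT)
          have := Real.log_le_log hτpos hΩτ
          linarith [htseq']
        -- width bound
        have hwidth : (ts - t₀') * (B + ((n:ℝ)+1) * c) ≤ 1/(2*A) := by
          have h1 : ts - t₀' ≤ h n := by
            have : t ≤ t₀' + h n := by
              have := hle
              rw [hSsucc] at this
              simp only [ht₀'def]
              linarith
            linarith
          have h2 : (0:ℝ) < B + ((n:ℝ)+1) * c := by
            have := hBnc_pos n
            push_cast at this
            linarith
          have h3 : (ts - t₀') * (B + ((n:ℝ)+1) * c) ≤ h n * (B + ((n:ℝ)+1) * c) :=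
            mul_le_mul_of_nonneg_right h1 h2.le
          have h4 : h n * (B + ((n:ℝ)+1) * c) = 1/(2*A) := by
            simp only [hhdef]
            have := hBnc_pos n
            field_simp
          exact le_of_le_of_eq h3 h4
        have hstep := step t₀' ts (B + ((n:ℝ)+1) * c) ht₀T₀ htslt htsT hbndIcc hwidth
        -- contradiction
        have hP0 : 0 < Ω t₀' := hΩpos t₀' ht₀T₀ ht₀T
        have hPs : 0 < Ω ts := hΩpos ts (ht₀T₀.trans hts0) htsT
        have hR0 : (0:ℝ) < R := by linarith
        have hlog2R : Real.log (Ω ts) ≤ Real.log (2*R) + Real.log (Ω t₀') := by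
          have h2 : Real.log (Ω ts) ≤ Real.log (2*R*Ω t₀') := Real.log_le_log hPs hstep
          rw [Real.log_mul (by positivity) hP0.ne'] at h2
          exact h2
        have hfin : B + ((n:ℝ)+1) * c ≤ B + (n:ℝ)*c + c - 1 := by
          rw [← htseq']
          simp only [hcdef] at hlog2R hGt₀ ⊢
          linarith
        nlinarith
  -- harmonic lower bound for S
  set D : ℝ := 2*A*(B+c) with hDdef
  have hDpos : 0 < D := by
    simp only [hDdef]
    nlinarith
  have hSlog : ∀ n : ℕ, Real.log (n+1) ≤ D * S n := by
    intro n
    induction n with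
    | zero => simp [hS0]
    | succ n ih =>
      have hstep : Real.log ((n:ℝ)+1+1) - Real.log ((n:ℝ)+1) ≤ D * h n := by
        have hn1 : (0:ℝ) < (n:ℝ)+1 := by positivity
        have e1 : Real.log ((n:ℝ)+1+1) - Real.log ((n:ℝ)+1)
            = Real.log (((n:ℝ)+1+1)/((n:ℝ)+1)) := by
          rw [Real.log_div (by positivity) (by positivity)]
        have e2 : Real.log (((n:ℝ)+1+1)/((n:ℝ)+1)) ≤ ((n:ℝ)+1+1)/((n:ℝ)+1) - 1 :=
          Real.log_le_sub_one_of_pos (by positivity)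
        have e3 : ((n:ℝ)+1+1)/((n:ℝ)+1) - 1 = 1/((n:ℝ)+1) := by
          field_simp
          ring
        have e4 : 1/((n:ℝ)+1) ≤ D * h n := by
          have hb := hBnc_pos n
          have hDh : D * h n = (B+c)/(B+((n:ℝ)+1)*c) := by
            simp only [hDdef, hhdef]
            field_simp
          rw [hDh, div_le_div_iff₀ (by positivity) hb]
          have hn0 : (0:ℝ) ≤ (n:ℝ) := Nat.cast_nonneg n
          nlinarith
        linarith [e1, e2, e3.le, e4]
      have : Real.log ((n:ℝ)+1+1) ≤ D * S n + D * h n := by linarith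
      rw [hSsucc]
      push_cast
      linarith [this]
  -- main bound
  set C₂ : ℝ := Real.log (B + 2*c) + 1 with hC₂def
  have hC₂pos : 0 < C₂ := by
    have h1 : (1:ℝ) < B + 2*c := by linarith
    have := Real.log_pos h1
    simp only [hC₂def]; linarith
  have main : ∀ t : ℝ, T₀ ≤ t → (t:EReal) < Tstar →
      Real.log (Real.log (Ω t)) ≤ D * t + C₂ := by
    intro t ht htT
    set n : ℕ := ⌈Real.exp (D*(t-T₀))⌉₊ with hndef
    have hn1 : Real.exp (D*(t-T₀)) ≤ (n:ℝ) := Nat.le_ceil _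
    have htle : t ≤ T₀ + S n := by
      have h1 : D*(t-T₀) ≤ Real.log ((n:ℝ)+1) := by
        calc D*(t-T₀) = Real.log (Real.exp (D*(t-T₀))) := (Real.log_exp _).symm
          _ ≤ Real.log ((n:ℝ)+1) :=
            Real.log_le_log (Real.exp_pos _) (by linarith)
      have h2 : D*(t-T₀) ≤ D * S n := le_trans h1 (hSlog n)
      have h3 : t - T₀ ≤ S n := le_of_mul_le_mul_left (by linarith) hDpos
      linarith
    have hG := key n t ht htT htle
    have hE1 : (1:ℝ) ≤ Real.exp (D*(t-T₀)) := by
      rw [← Real.exp_zero]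
      apply Real.exp_le_exp.mpr
      nlinarith
    have hnb : (n:ℝ) ≤ Real.exp (D*(t-T₀)) + 1 :=
      (Nat.ceil_lt_add_one (Real.exp_pos _).le).le
    set E : ℝ := Real.exp (D*(t-T₀)) with hEdef
    have hG2 : Real.log (Ω t) + 1 ≤ (B + 2*c) * E := by
      have h1 : Real.log (Ω t) + 1 ≤ B + (E+1)*c := by
        have : (n:ℝ)*c ≤ (E+1)*c := mul_le_mul_of_nonneg_right hnb hcpos.le
        linarith
      nlinarith
    have hlogpos : 0 < Real.log (Ω t) := by
      have := hlogΩ t ht htT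
      have := Real.exp_pos 1
      linarith
    have h3 : Real.log (Real.log (Ω t)) ≤ Real.log ((B + 2*c) * E) := by
      apply Real.log_le_log hlogpos
      linarith
    have h4 : Real.log ((B + 2*c) * E) = Real.log (B + 2*c) + D*(t-T₀) := by
      rw [Real.log_mul (by positivity) (by simp only [hEdef]; positivity)]
      simp [hEdef, Real.log_exp]
    have h5 : Real.log (B + 2*c) + D*(t-T₀) ≤ D * t + C₂ := by
      have : D * T₀ ≥ 0 := by positivity
      simp only [hC₂def]
      nlinarith
    linarith
  constructor
  · exact ⟨D, hDpos, C₂, hC₂pos, main⟩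
  · intro hfin
    have hTne : Tstar ≠ ⊤ := hfin.ne
    have hTne' : Tstar ≠ ⊥ := by
      intro hbot
      rw [hbot] at hTT
      exact (not_lt_bot hTT)
    refine ⟨Real.exp (Real.exp (D * Tstar.toReal + C₂)), ?_⟩
    intro t ht htT
    have htle : t ≤ Tstar.toReal := by
      have h1 : ((t:ℝ):EReal).toReal ≤ Tstar.toReal :=
        EReal.toReal_le_toReal htT.le (EReal.coe_ne_bot t) hTne
      simpa using h1
    have h2 : Real.log (Real.log (Ω t)) ≤ D * Tstar.toReal + C₂ := by
      have := main t ht htT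
      nlinarith
    have hlogpos : 0 < Real.log (Ω t) := by
      have := hlogΩ t ht htT
      have := Real.exp_pos 1
      linarith
    have hΩp : 0 < Ω t := hΩpos t ht htT
    have h3 : Real.log (Ω t) ≤ Real.exp (D * Tstar.toReal + C₂) := by
      calc Real.log (Ω t) = Real.exp (Real.log (Real.log (Ω t))) :=
            (Real.exp_log hlogpos).symm
        _ ≤ Real.exp (D * Tstar.toReal + C₂) := Real.exp_le_exp.mpr h2
    calc Ω t = Real.exp (Real.log (Ω t)) := (Real.exp_log hΩp).symm
      _ ≤ Real.exp (Real.exp (D * Tstar.toReal + C₂)) := Real.exp_le_exp.mpr h3
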